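/- arXiv:1608.03112 — 3 statements merged into one kernel-verified Lean document; each statement's English description precedes it below -/
import Mathlib

section
/- Let R be a commutative ring, r ≥ 1, V a free R-module of rank r, and L ⊆ V a submodule which is a direct summand of V, is free of rank 1, and such that V/L is free of rank r−1. Let ψ_1, …, ψ_{r−1} ∈ Hom_R(V, R) be linear functionals that vanish on L and whose induced functionals on V/L form an R-basis of Hom_R(V/L, R). Define Ψ : ⋀^r V → V as the linear map induced by the alternating multilinear map (v_1, …, v_r) ↦ Σ_{i=1}^r (−1)^{i+1} det(A_i) · v_i, where A_i is the (r−1)×(r−1) matrix whose (j,k)-entry is ψ_j(v_{σ_i(k)}), with σ_i the increasing enumeration of {1,…,r} \ {i}. Then Ψ is injective and its image is exactly L; in particular Ψ gives an R-module isomorphism ⋀^r V ≅ L. -/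
/-- Auxiliary: any value of an alternating map over `Fin m` lies in the span of its
value on a basis. -/
lemma aux_ιMulti_mem_span {R V N : Type*} [CommRing R] [AddCommGroup V] [Module R V]
    [AddCommGroup N] [Module R N]
    {m : ℕ} (b : Module.Basis (Fin m) R V) (f : V [⋀^Fin m]→ₗ[R] N) (v : Fin m → V) :
    f v ∈ Submodule.span R {f ⇑b} := by
  classical
  have hv : v = fun i => ∑ j, b.repr (v i) j • b j := by
    funext i; exact (b.sum_repr (v i)).symm
  rw [hv]
  have hcoe : f (fun i => ∑ j, b.repr (v i) j • b j)
      = ∑ r : Fin m → Fin m, f (fun i => b.repr (v i) (r i) • b (r i)) :=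
    f.toMultilinearMap.map_sum (g := fun i j => b.repr (v i) j • b j)
  rw [hcoe]
  refine Submodule.sum_mem _ fun r _ => ?_
  have hsmul : f (fun i => b.repr (v i) (r i) • b (r i))
      = (∏ i, b.repr (v i) (r i)) • f (fun i => b (r i)) :=
    f.toMultilinearMap.map_smul_univ _ _
  rw [hsmul]
  by_cases hr : Function.Injective r
  · have hbij : Function.Bijective r := (Finite.injective_iff_bijective).mp hr
    let σ : Equiv.Perm (Fin m) := Equiv.ofBijective r hbij
    have hfr : f (fun i => b (r i)) = Equiv.Perm.sign σ • f ⇑b := by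
      have := f.map_perm ⇑b σ
      exact this
    rw [hfr]
    rcases Int.units_eq_one_or (Equiv.Perm.sign σ) with h | h <;> rw [h]
    · simpa using Submodule.smul_mem _ _ (Submodule.mem_span_singleton_self (f ⇑b))
    · simp only [Units.neg_smul, one_smul, smul_neg]
      exact Submodule.neg_mem _ <| Submodule.smul_mem _ _
        (Submodule.mem_span_singleton_self (f ⇑b))
  · have h0 : f (fun i => b (r i)) = 0 := by
      apply f.map_eq_zero_of_not_injective
      intro hinj
      exact hr fun x y hxy => hinj (by simp [hxy])
    rw [h0, smul_zero]
    exact Submodule.zero_mem _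

/-- Setup as in Statement 0 (with `r = n + 1 ≥ 1`):  `V` free of rank `r`,
`L ⊆ V` a direct summand, free of rank 1, with `V/L` free of rank `r - 1`, and functionals
`ψ 0, …, ψ (r-2)` vanishing on `L` inducing a basis of `Hom_R(V/L, R)`.
Let `Ψ : ⋀^r V → V` be the linear map induced by the alternating multilinear map
`(v 0, …, v (r-1)) ↦ ∑ i, (-1)^i • det (A i) • v i`, where `(A i) j k = ψ j (v (σ i k))`
and `σ i = Fin.succAbove i` is the increasing enumeration of `{0, …, r-1} \ {i}`.
Then `Ψ` is injective with image exactly `L`; in particular `⋀^r V ≅ L`. -/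
theorem stmt1 {R : Type*} [CommRing R] {V : Type*} [AddCommGroup V] [Module R V]
    (n : ℕ) (bV : Module.Basis (Fin (n + 1)) R V)
    (L : Submodule R V) (hsum : ∃ W : Submodule R V, IsCompl L W)
    (bL : Module.Basis (Fin 1) R L) (bQ : Module.Basis (Fin n) R (V ⧸ L))
    (ψ : Fin n → (V →ₗ[R] R))
    (hker : ∀ j, L ≤ LinearMap.ker (ψ j))
    (hbasis : ∃ B : Module.Basis (Fin n) R (Module.Dual R (V ⧸ L)),
      ∀ j, B j = L.liftQ (ψ j) (hker j))
    (Ψ : (⋀[R]^(n + 1) V) →ₗ[R] V)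
    (hΨ : ∀ v : Fin (n + 1) → V,
      Ψ ⟨ExteriorAlgebra.ιMulti R (n + 1) v,
          ExteriorAlgebra.ιMulti_range R (n + 1) ⟨v, rfl⟩⟩ =
        ∑ i : Fin (n + 1),
          ((-1 : R) ^ (i : ℕ) *
            Matrix.det (Matrix.of fun (j : Fin n) (k : Fin n) => ψ j (v (i.succAbove k)))) •
          v i) :
    Function.Injective Ψ ∧ LinearMap.range Ψ = L := by
  classical
  obtain ⟨B, hB⟩ := hbasis
  haveI : Module.Finite R (V ⧸ L) := Module.Finite.of_basis bQ
  haveI : Module.Free R (V ⧸ L) := Module.Free.of_basis bQ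
  -- the basis of V ⧸ L predual to B
  set b : Module.Basis (Fin n) R (V ⧸ L) :=
    B.dualBasis.map (Module.evalEquiv R (V ⧸ L)).symm with hbdef
  have hBb : ∀ j m, B j (b m) = if j = m then 1 else 0 := by
    intro j m
    have h1 : Module.evalEquiv R (V ⧸ L) (b m) = B.dualBasis m := by
      simp [hbdef]
    have h2 : B.dualBasis m (B j) = if j = m then 1 else 0 := B.dualBasis_apply_self m j
    rw [← h1] at h2
    simpa [Module.evalEquiv_apply, Module.Dual.eval_apply] using h2
  have hcoord : ∀ (x : V ⧸ L) j, b.repr x j = B j x := by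
    intro x j
    conv_rhs => rw [← b.sum_repr x]
    rw [map_sum]
    simp [map_smul, hBb, Finset.sum_ite_eq]
  -- key fact: the sums defining Ψ always lie in L
  have hmemL : ∀ w : Fin (n + 1) → V,
      (∑ i : Fin (n + 1),
        ((-1 : R) ^ (i : ℕ) *
          Matrix.det (Matrix.of fun (j : Fin n) (k : Fin n) => ψ j (w (i.succAbove k)))) •
        w i) ∈ L := by
    intro w
    rw [← Submodule.Quotient.mk_eq_zero]
    refine b.ext_elem fun j => ?_
    rw [hcoord]
    simp only [map_zero, Finsupp.coe_zero, Pi.zero_apply]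
    have hsum' : B j (Submodule.Quotient.mk (p := L)
        (∑ i : Fin (n + 1),
          ((-1 : R) ^ (i : ℕ) *
            Matrix.det (Matrix.of fun (j : Fin n) (k : Fin n) => ψ j (w (i.succAbove k)))) •
          w i))
        = ∑ i : Fin (n + 1),
          ((-1 : R) ^ (i : ℕ) *
            Matrix.det (Matrix.of fun (j : Fin n) (k : Fin n) => ψ j (w (i.succAbove k)))) *
          ψ j (w i) := by
      rw [hB j]
      rw [show (Submodule.Quotient.mk (p := L) (∑ i : Fin (n + 1),
          ((-1 : R) ^ (i : ℕ) *
            Matrix.det (Matrix.of fun (j : Fin n) (k : Fin n) => ψ j (w (i.succAbove k)))) •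
          w i)) = L.mkQ (∑ i : Fin (n + 1),
          ((-1 : R) ^ (i : ℕ) *
            Matrix.det (Matrix.of fun (j : Fin n) (k : Fin n) => ψ j (w (i.succAbove k)))) •
          w i) from rfl]
      rw [map_sum, map_sum]
      refine Finset.sum_congr rfl fun i _ => ?_
      rw [map_smul, map_smul, Submodule.mkQ_apply, Submodule.liftQ_apply, smul_eq_mul]
    rw [hsum']
    set N : Matrix (Fin (n + 1)) (Fin (n + 1)) R :=
      Matrix.of fun r c => ψ (Fin.cases j (fun k => k) r) (w c) with hN
    have hdet0 : N.det = 0 := by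
      refine Matrix.det_zero_of_row_eq (i := 0) (j := j.succ) (Fin.succ_ne_zero j).symm ?_
      funext c
      simp [hN]
    calc
      (∑ i : Fin (n + 1),
          ((-1 : R) ^ (i : ℕ) *
            Matrix.det (Matrix.of fun (j : Fin n) (k : Fin n) => ψ j (w (i.succAbove k)))) *
          ψ j (w i))
          = ∑ i : Fin (n + 1),
            (-1 : R) ^ (i : ℕ) * N 0 i * (N.submatrix Fin.succ i.succAbove).det := by
        refine Finset.sum_congr rfl fun i _ => ?_
        have hsub : N.submatrix Fin.succ i.succAbove
            = Matrix.of fun (j' : Fin n) (k : Fin n) => ψ j' (w (i.succAbove k)) := by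
          ext j' k
          simp [hN]
        have hN0 : N 0 i = ψ j (w i) := by simp [hN]
        rw [hsub, hN0]
        ring
      _ = N.det := (Matrix.det_succ_row_zero N).symm
      _ = 0 := hdet0
  -- the distinguished generator of L
  set e0 : V := (bL 0 : V) with he0
  have he0L : e0 ∈ L := (bL 0).2
  have hsmul_e0 : ∀ r : R, r • e0 = 0 → r = 0 := by
    intro r hr
    have h1 : ((r • bL 0 : L) : V) = ((0 : L) : V) := by
      simpa [he0] using hr
    have h2 : (r • bL 0 : L) = 0 := Subtype.ext h1
    have h3 : bL.repr (r • bL 0) 0 = 0 := by rw [h2]; simp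
    simpa [map_smul, Module.Basis.repr_self] using h3
  have hLspan : L = Submodule.span R {e0} := by
    apply le_antisymm
    · intro x hx
      have hxr : (⟨x, hx⟩ : L) = bL.repr ⟨x, hx⟩ 0 • bL 0 := by
        conv_lhs => rw [← bL.sum_repr ⟨x, hx⟩]
        simp
      have : x = bL.repr ⟨x, hx⟩ 0 • e0 := by
        have := congrArg (fun y : L => (y : V)) hxr
        simpa [he0] using this
      rw [this]
      exact Submodule.smul_mem _ _ (Submodule.mem_span_singleton_self e0)
    · rw [Submodule.span_le, Set.singleton_subset_iff]
      exact he0L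
  -- the distinguished family v
  choose u hu using fun m : Fin n => L.mkQ_surjective (b m)
  set v : Fin (n + 1) → V := Fin.cons e0 u with hvdef
  have hψv0 : ∀ j, ψ j (v 0) = 0 := by
    intro j
    have : v 0 = e0 := rfl
    rw [this]
    exact hker j he0L
  have hψvs : ∀ j (k : Fin n), ψ j (v k.succ) = if j = k then 1 else 0 := by
    intro j k
    have h1 : ψ j (u k) = B j (b k) := by
      rw [hB j, ← hu k, Submodule.mkQ_apply, Submodule.liftQ_apply]
    have h2 : v k.succ = u k := by simp [hvdef]
    rw [h2, h1, hBb]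
  -- Ψ on the wedge of v is e0
  have hΨv : Ψ ⟨ExteriorAlgebra.ιMulti R (n + 1) v,
      ExteriorAlgebra.ιMulti_range R (n + 1) ⟨v, rfl⟩⟩ = e0 := by
    rw [hΨ v]
    rw [Finset.sum_eq_single (0 : Fin (n + 1))]
    · have hmat : (Matrix.of fun (j : Fin n) (k : Fin n) => ψ j (v ((0 : Fin (n + 1)).succAbove k)))
          = (1 : Matrix (Fin n) (Fin n) R) := by
        ext j k
        rw [Matrix.of_apply, Fin.succAbove_zero, hψvs, Matrix.one_apply]
      rw [hmat]
      simp [hvdef]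
    · intro i _ hi
      have hipos : (0 : Fin (n + 1)) < i := Fin.pos_iff_ne_zero.mpr hi
      have hn : 0 < n := by
        have h1 : (1 : ℕ) ≤ (i : ℕ) := hipos
        have h2 : (i : ℕ) ≤ n := Nat.lt_succ_iff.mp i.isLt
        omega
      have hdet : Matrix.det (Matrix.of fun (j : Fin n) (k : Fin n) => ψ j (v (i.succAbove k)))
          = 0 := by
        refine Matrix.det_eq_zero_of_column_eq_zero (⟨0, hn⟩ : Fin n) fun j => ?_
        have hsa : i.succAbove ⟨0, hn⟩ = 0 := by
          rw [Fin.succAbove_of_castSucc_lt]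
          · rfl
          · exact hipos
        rw [Matrix.of_apply, hsa]
        exact hψv0 j
      rw [hdet, mul_zero, zero_smul]
    · intro h
      exact absurd (Finset.mem_univ (0 : Fin (n + 1))) h
  -- spanning of the top exterior power by the wedge of bV
  have hx_span : ∀ x : ⋀[R]^(n + 1) V, ∃ c : R,
      (x : ExteriorAlgebra R V) = c • ExteriorAlgebra.ιMulti R (n + 1) ⇑bV := by
    intro x
    have hx : (x : ExteriorAlgebra R V)
        ∈ Submodule.span R {ExteriorAlgebra.ιMulti R (n + 1) ⇑bV} := by
      have h1 : (x : ExteriorAlgebra R V)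
          ∈ Submodule.span R (Set.range (ExteriorAlgebra.ιMulti R (n + 1) (M := V))) := by
        rw [ExteriorAlgebra.ιMulti_span_fixedDegree]
        exact x.2
      refine Submodule.span_le.mpr ?_ h1
      rintro _ ⟨w, rfl⟩
      exact aux_ιMulti_mem_span bV (ExteriorAlgebra.ιMulti R (n + 1)) w
    obtain ⟨c, hc⟩ := Submodule.mem_span_singleton.mp hx
    exact ⟨c, hc.symm⟩
  -- the value of Ψ on the wedge of bV
  obtain ⟨a, ha⟩ : ∃ a : R,
      Ψ ⟨ExteriorAlgebra.ιMulti R (n + 1) ⇑bV,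
        ExteriorAlgebra.ιMulti_range R (n + 1) ⟨⇑bV, rfl⟩⟩ = a • e0 := by
    have h1 : Ψ ⟨ExteriorAlgebra.ιMulti R (n + 1) ⇑bV,
        ExteriorAlgebra.ιMulti_range R (n + 1) ⟨⇑bV, rfl⟩⟩ ∈ L := by
      rw [hΨ ⇑bV]
      exact hmemL ⇑bV
    rw [hLspan] at h1
    obtain ⟨a, ha⟩ := Submodule.mem_span_singleton.mp h1
    exact ⟨a, ha.symm⟩
  -- general formula for Ψ
  have key : ∀ x : ⋀[R]^(n + 1) V, ∀ c : R,
      (x : ExteriorAlgebra R V) = c • ExteriorAlgebra.ιMulti R (n + 1) ⇑bV →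
      Ψ x = (c * a) • e0 := by
    intro x c hc
    have hxeq : x = c • (⟨ExteriorAlgebra.ιMulti R (n + 1) ⇑bV,
        ExteriorAlgebra.ιMulti_range R (n + 1) ⟨⇑bV, rfl⟩⟩ : ⋀[R]^(n + 1) V) :=
      Subtype.ext (by simpa using hc)
    rw [hxeq, map_smul, ha, smul_smul]
  -- a is invertible, with inverse d
  obtain ⟨d, hd⟩ := hx_span ⟨ExteriorAlgebra.ιMulti R (n + 1) v,
    ExteriorAlgebra.ιMulti_range R (n + 1) ⟨v, rfl⟩⟩
  have hda : d * a = 1 := by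
    have h1 : (d * a) • e0 = e0 := by
      rw [← key _ d hd, hΨv]
    have h2 : (d * a - 1) • e0 = 0 := by
      rw [sub_smul, one_smul, h1, sub_self]
    exact sub_eq_zero.mp (hsmul_e0 _ h2)
  constructor
  · -- injectivity
    intro x y hxy
    obtain ⟨c, hc⟩ := hx_span x
    obtain ⟨c', hc'⟩ := hx_span y
    rw [key x c hc, key y c' hc'] at hxy
    have h2 : ((c * a) - (c' * a)) • e0 = 0 := by
      rw [sub_smul, hxy, sub_self]
    have h3 : c * a = c' * a := sub_eq_zero.mp (hsmul_e0 _ h2)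
    have h4 : c = c' := by
      have := congrArg (· * d) h3
      simpa [mul_assoc, mul_comm a d, hda] using this
    apply Subtype.ext
    rw [hc, hc', h4]
  · -- range
    apply le_antisymm
    · rintro y ⟨x, rfl⟩
      obtain ⟨c, hc⟩ := hx_span x
      rw [key x c hc]
      exact L.smul_mem _ he0L
    · rw [hLspan, Submodule.span_le, Set.singleton_subset_iff]
      exact ⟨_, hΨv⟩
end

section
/- Let R be a commutative ring, let g : A → B be an R-linear map of R-modules, and let a ∈ R be an element such that a·B is contained in the image of g. Then for every k ≥ 1, a^k · (⋀^k B) is contained in the image of the induced map ⋀^k g : ⋀^k A → ⋀^k B on k-th exterior powers. -/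
/-- Let `R` be a commutative ring, `g : A → B` an `R`-linear map, and `a ∈ R`
with `a • B ⊆ im g`.  Then for every `k ≥ 1`, `a^k • (⋀^k B)` is contained in the image of the
induced map `⋀^k g : ⋀^k A → ⋀^k B`.  Here `⋀^k A` is realized as the `k`-th exterior power
submodule of the exterior algebra, and the image of `⋀^k g` is the image of `⋀^k A` under the
algebra map induced by `g` (which is determined by `m₁ ∧ ⋯ ∧ m_k ↦ g m₁ ∧ ⋯ ∧ g m_k`). -/
theorem stmt4 {R : Type*} [CommRing R]
    {A B : Type*} [AddCommGroup A] [Module R A] [AddCommGroup B] [Module R B]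
    (g : A →ₗ[R] B) (a : R) (ha : ∀ b : B, a • b ∈ LinearMap.range g) :
    ∀ k : ℕ, 1 ≤ k → ∀ x ∈ ⋀[R]^k B,
      a ^ k • x ∈ Submodule.map (ExteriorAlgebra.map g).toLinearMap (⋀[R]^k A) := by
  intro k _ x hx
  rw [← ExteriorAlgebra.ιMulti_span_fixedDegree] at hx
  induction hx using Submodule.span_induction with
  | mem y hy =>
    obtain ⟨v, rfl⟩ := hy
    choose w hw using fun i => ha (v i)
    refine ⟨ExteriorAlgebra.ιMulti R k w, ?_, ?_⟩
    · exact ExteriorAlgebra.ιMulti_range R k ⟨w, rfl⟩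
    · rw [AlgHom.toLinearMap_apply, ExteriorAlgebra.map_apply_ιMulti]
      have : (g ∘ w) = fun i => a • v i := funext fun i => hw i
      rw [this]
      have := (ExteriorAlgebra.ιMulti R k).map_smul_univ (fun _ => a) v
      simpa using this
  | zero => simp
  | add y z _ _ hy hz => rw [smul_add]; exact Submodule.add_mem _ hy hz
  | smul c y _ hy => rw [smul_comm]; exact Submodule.smul_mem _ c hy
end

section
/- Let R be an integral domain and let f : M → N be an injective R-linear map between free R-modules of the same finite rank r. Then for every k with 0 ≤ k ≤ r, the induced map ⋀^k f : ⋀^k M → ⋀^k N on k-th exterior powers is injective. -/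
namespace Stmt7Aux

open ExteriorAlgebra

variable {R : Type*} [CommRing R] {M : Type*} [AddCommGroup M] [Module R M]
  {n : ℕ} (b : Module.Basis (Fin n) R M)

/-- Product of basis vectors in the exterior algebra, indexed by a list. -/
noncomputable def eprod (t : List (Fin n)) : ExteriorAlgebra R M :=
  (t.map fun i => ExteriorAlgebra.ι R (b i)).prod

@[simp] lemma eprod_nil : eprod b ([] : List (Fin n)) = 1 := rfl

@[simp] lemma eprod_cons (i : Fin n) (t : List (Fin n)) :
    eprod b (i :: t) = ExteriorAlgebra.ι R (b i) * eprod b t := by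
  simp [eprod]

lemma eprod_append (s t : List (Fin n)) : eprod b (s ++ t) = eprod b s * eprod b t := by
  simp [eprod]

/-- Contraction with the `i`-th coordinate functional. -/
noncomputable def ctr1 (i : Fin n) : ExteriorAlgebra R M →ₗ[R] ExteriorAlgebra R M :=
  CliffordAlgebra.contractLeft (Q := (0 : QuadraticForm R M)) (b.coord i)

lemma ctr1_ι_mul (i : Fin n) (m : M) (x : ExteriorAlgebra R M) :
    ctr1 b i (ExteriorAlgebra.ι R m * x) = b.coord i m • x - ExteriorAlgebra.ι R m * ctr1 b i x :=
  CliffordAlgebra.contractLeft_ι_mul _ _ _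

lemma ctr1_one (i : Fin n) : ctr1 b i (1 : ExteriorAlgebra R M) = 0 := by
  unfold ctr1
  exact CliffordAlgebra.contractLeft_one (Q := (0 : QuadraticForm R M)) (b.coord i)

lemma coord_basis (i j : Fin n) : b.coord i (b j) = if j = i then 1 else 0 := by
  simp [Module.Basis.coord_apply, Module.Basis.repr_self, Finsupp.single_apply]

lemma ctr1_eprod_not_mem (i : Fin n) :
    ∀ t : List (Fin n), i ∉ t → ctr1 b i (eprod b t) = 0
  | [], _ => ctr1_one b i
  | j :: t, h => by
    have hj : j ≠ i := fun hji => h (hji ▸ List.mem_cons_self)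
    have ht : i ∉ t := fun hit => h (List.mem_cons_of_mem _ hit)
    rw [eprod_cons, ctr1_ι_mul, coord_basis, if_neg hj, ctr1_eprod_not_mem i t ht]
    simp

lemma ctr1_eprod (i : Fin n) :
    ∀ t : List (Fin n), t.Nodup → ∃ c : R, ctr1 b i (eprod b t) = c • eprod b (t.erase i)
  | [], _ => ⟨0, by simp [ctr1_one]⟩
  | j :: t, h => by
    have hjt : j ∉ t := (List.nodup_cons.mp h).1
    have ht : t.Nodup := (List.nodup_cons.mp h).2
    by_cases hij : i = j
    · subst hij
      refine ⟨1, ?_⟩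
      rw [List.erase_cons_head, eprod_cons, ctr1_ι_mul, coord_basis, if_pos rfl,
        ctr1_eprod_not_mem b i t hjt]
      simp
    · obtain ⟨c, hc⟩ := ctr1_eprod i t ht
      refine ⟨-c, ?_⟩
      have herase : (j :: t).erase i = j :: t.erase i := by
        rw [List.erase_cons_tail]
        simp [Ne.symm hij]
      rw [herase, eprod_cons, ctr1_ι_mul, coord_basis, if_neg (Ne.symm hij), hc, eprod_cons]
      simp [mul_smul_comm]

/-- Iterated contraction. -/
noncomputable def ctr (s : List (Fin n)) : ExteriorAlgebra R M →ₗ[R] ExteriorAlgebra R M :=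
  s.foldr (fun i F => F ∘ₗ ctr1 b i) LinearMap.id

@[simp] lemma ctr_nil : ctr b ([] : List (Fin n)) = LinearMap.id := rfl

lemma ctr_cons (i : Fin n) (s : List (Fin n)) :
    ctr b (i :: s) = ctr b s ∘ₗ ctr1 b i := rfl

lemma ctr_eprod_self : ∀ t : List (Fin n), t.Nodup → ctr b t (eprod b t) = 1
  | [], _ => by simp
  | i :: t, h => by
    have hit : i ∉ t := (List.nodup_cons.mp h).1
    have ht : t.Nodup := (List.nodup_cons.mp h).2
    rw [ctr_cons, LinearMap.comp_apply, eprod_cons, ctr1_ι_mul, coord_basis, if_pos rfl,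
      ctr1_eprod_not_mem b i t hit]
    simpa using ctr_eprod_self t ht

lemma algebraMapInv_ι (m : M) : (algebraMapInv (ExteriorAlgebra.ι R m) : R) = 0 := by
  simp [algebraMapInv]

lemma ctr_eprod_ne :
    ∀ s : List (Fin n), ∀ t : List (Fin n), s.Pairwise (· < ·) → t.Pairwise (· < ·) → s ≠ t →
      algebraMapInv (ctr b s (eprod b t)) = 0
  | [], t, _, _, hne => by
    match t with
    | [] => exact absurd rfl hne
    | j :: t' => simp [algebraMapInv_ι]
  | i :: s', t, hs, ht, hne => by
    have hs' : s'.Pairwise (· < ·) := hs.of_cons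
    by_cases hm : i ∈ t
    · obtain ⟨c, hc⟩ := ctr1_eprod b i t ht.nodup
      have hts : (t.erase i).Pairwise (· < ·) := ht.sublist List.erase_sublist
      have hne' : s' ≠ t.erase i := by
        intro heq
        apply hne
        obtain ⟨j, t'', rfl⟩ : ∃ j t'', t = j :: t'' := by
          cases t with
          | nil => simp at hm
          | cons j t'' => exact ⟨j, t'', rfl⟩
        by_cases hij : j = i
        · subst hij
          rw [List.erase_cons_head] at heq
          rw [heq]
        · exfalso
          have hit'' : i ∈ t'' := by
            rcases List.mem_cons.mp hm with h | h
            · exact absurd h.symm hij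
            · exact h
          have hji : j < i := List.rel_of_pairwise_cons ht hit''
          have hjmem : j ∈ (j :: t'').erase i := by
            rw [List.erase_cons_tail (by simp [hij])]
            exact List.mem_cons_self
          rw [← heq] at hjmem
          have : i < j := List.rel_of_pairwise_cons hs hjmem
          exact lt_asymm hji this
      rw [ctr_cons, LinearMap.comp_apply, hc, map_smul, map_smul,
        ctr_eprod_ne s' (t.erase i) hs' hts hne']
      simp
    · rw [ctr_cons, LinearMap.comp_apply, ctr1_eprod_not_mem b i t hm]
      simp

/-- The linear functional attached to a sorted list. -/
noncomputable def ell (s : List (Fin n)) : ExteriorAlgebra R M →ₗ[R] R :=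
  (algebraMapInv (M := M)).toLinearMap ∘ₗ ctr b s

lemma ell_eprod (s t : List (Fin n)) (hs : s.Pairwise (· < ·)) (ht : t.Pairwise (· < ·)) :
    ell b s (eprod b t) = if s = t then 1 else 0 := by
  by_cases h : s = t
  · subst h
    rw [if_pos rfl]
    simp [ell, ctr_eprod_self b s hs.nodup]
  · rw [if_neg h]
    exact ctr_eprod_ne b s t hs ht h

/-- The span of the sorted products. -/
noncomputable def SP : Submodule R (ExteriorAlgebra R M) :=
  Submodule.span R (Set.range fun t : {l : List (Fin n) // l.Pairwise (· < ·)} => eprod b t.1)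

lemma mul_eprod :
    ∀ t : List (Fin n), t.Pairwise (· < ·) → ∀ i : Fin n,
      ∃ c : R, ∃ u : List (Fin n), u.Pairwise (· < ·) ∧ (∀ x ∈ u, x = i ∨ x ∈ t) ∧
        ExteriorAlgebra.ι R (b i) * eprod b t = c • eprod b u
  | [], _, i => ⟨1, [i], List.pairwise_singleton _ i, by simp, by simp⟩
  | j :: t, ht, i => by
    have ht' : t.Pairwise (· < ·) := ht.of_cons
    rcases lt_trichotomy i j with h | h | h
    · refine ⟨1, i :: j :: t, ?_, ?_, by simp⟩
      · refine List.pairwise_cons.mpr ⟨?_, ht⟩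
        intro x hx
        rcases List.mem_cons.mp hx with rfl | hx
        · exact h
        · exact h.trans (List.rel_of_pairwise_cons ht hx)
      · intro x hx
        rcases List.mem_cons.mp hx with rfl | hx
        · exact Or.inl rfl
        · exact Or.inr hx
    · subst h
      refine ⟨0, [], List.Pairwise.nil, by simp, ?_⟩
      rw [eprod_cons, ← mul_assoc, ι_sq_zero, zero_mul, zero_smul]
    · obtain ⟨c, u, hu, hmem, hprod⟩ := mul_eprod t ht' i
      refine ⟨-c, j :: u, ?_, ?_, ?_⟩
      · refine List.pairwise_cons.mpr ⟨?_, hu⟩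
        intro x hx
        rcases hmem x hx with rfl | hx
        · exact h
        · exact List.rel_of_pairwise_cons ht hx
      · intro x hx
        rcases List.mem_cons.mp hx with rfl | hx
        · exact Or.inr (List.mem_cons_self)
        · rcases hmem x hx with rfl | hx'
          · exact Or.inl rfl
          · exact Or.inr (List.mem_cons_of_mem _ hx')
      · have hanti : ExteriorAlgebra.ι R (b i) * ExteriorAlgebra.ι R (b j) =
            -(ExteriorAlgebra.ι R (b j) * ExteriorAlgebra.ι R (b i)) := by
          have h2 := ι_sq_zero (R := R) (b i + b j)
          rw [map_add, add_mul, mul_add, mul_add, ι_sq_zero, ι_sq_zero, zero_add,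
            add_zero] at h2
          exact eq_neg_of_add_eq_zero_left h2
        rw [eprod_cons, ← mul_assoc, hanti, neg_mul, mul_assoc, hprod, eprod_cons]
        simp [mul_smul_comm]

lemma eprod_mem_SP : ∀ l : List (Fin n), eprod b l ∈ SP b
  | [] => Submodule.subset_span ⟨⟨[], List.Pairwise.nil⟩, rfl⟩
  | i :: l => by
    have hl : eprod b l ∈ SP b := eprod_mem_SP l
    rw [eprod_cons]
    have key : ∀ z ∈ SP b, ExteriorAlgebra.ι R (b i) * z ∈ SP b := by
      intro z hz
      induction hz using Submodule.span_induction with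
      | mem x hx =>
        obtain ⟨⟨t, hts⟩, rfl⟩ := hx
        obtain ⟨c, u, hu, _, hprod⟩ := mul_eprod b t hts i
        rw [hprod]
        exact Submodule.smul_mem _ _ (Submodule.subset_span ⟨⟨u, hu⟩, rfl⟩)
      | zero => simpa using Submodule.zero_mem _
      | add x y _ _ hx hy => rw [mul_add]; exact Submodule.add_mem _ hx hy
      | smul c x _ hx => rw [mul_smul_comm]; exact Submodule.smul_mem _ _ hx
    exact key _ hl

lemma SP_eq_top : SP b = ⊤ := by
  rw [eq_top_iff]
  rintro x -
  induction x using ExteriorAlgebra.induction with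
  | algebraMap r =>
    rw [Algebra.algebraMap_eq_smul_one]
    simpa using Submodule.smul_mem _ r (eprod_mem_SP b [])
  | ι m =>
    rw [← b.sum_repr m, map_sum]
    refine Submodule.sum_mem _ fun i _ => ?_
    rw [map_smul]
    refine Submodule.smul_mem _ _ ?_
    simpa using eprod_mem_SP b [i]
  | mul x y hx hy =>
    have key : ∀ s : List (Fin n), ∀ z ∈ SP b, eprod b s * z ∈ SP b := by
      intro s z hz
      induction hz using Submodule.span_induction with
      | mem w hw =>
        obtain ⟨⟨t, _⟩, rfl⟩ := hw
        rw [← eprod_append]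
        exact eprod_mem_SP b (s ++ t)
      | zero => simpa using Submodule.zero_mem _
      | add u v _ _ hu hv => rw [mul_add]; exact Submodule.add_mem _ hu hv
      | smul c u _ hu => rw [mul_smul_comm]; exact Submodule.smul_mem _ _ hu
    induction hx using Submodule.span_induction with
    | mem w hw =>
      obtain ⟨⟨t, _⟩, rfl⟩ := hw
      exact key t y hy
    | zero => simpa using Submodule.zero_mem _
    | add u v _ _ hu hv => rw [add_mul]; exact Submodule.add_mem _ hu hv
    | smul c u _ hu => rw [smul_mul_assoc]; exact Submodule.smul_mem _ _ hu
  | add x y hx hy => exact Submodule.add_mem _ hx hy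

include b in
/-- Torsion-freeness of the exterior algebra of a finite free module. -/
lemma smul_eq_zero_iff [IsDomain R] {c : R} (hc : c ≠ 0) {z : ExteriorAlgebra R M}
    (h : c • z = 0) : z = 0 := by
  have hz : z ∈ SP b := by rw [SP_eq_top]; trivial
  rw [SP, Finsupp.mem_span_range_iff_exists_finsupp] at hz
  obtain ⟨w, hw⟩ := hz
  have hws : ∀ s : {l : List (Fin n) // l.Pairwise (· < ·)}, w s = 0 := by
    intro s
    have h1 : ell b s.1 z = w s := by
      rw [← hw, map_finsuppSum]
      have : ∀ t : {l : List (Fin n) // l.Pairwise (· < ·)}, ∀ a : R,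
          ell b s.1 (a • eprod b t.1) = if t = s then a else 0 := by
        intro t a
        rw [map_smul, ell_eprod b s.1 t.1 s.2 t.2]
        by_cases h' : t = s
        · subst h'; simp
        · rw [if_neg (fun hh : (s : List (Fin n)) = (t : List (Fin n)) =>
            h' (Subtype.ext hh.symm)), if_neg h']
          simp
      rw [Finsupp.sum]
      rw [Finset.sum_congr rfl (fun t _ => this t (w t))]
      rw [Finset.sum_ite_eq' w.support s (fun t => w t)]
      split_ifs with hs
      · rfl
      · exact (Finsupp.notMem_support_iff.mp hs).symm
    have h2 : c * (ell b s.1 z) = 0 := by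
      rw [← smul_eq_mul, ← map_smul, h, map_zero]
    rcases mul_eq_zero.mp h2 with h' | h'
    · exact absurd h' hc
    · rw [h1] at h'; exact h'
  rw [← hw]
  rw [Finsupp.sum]
  refine Finset.sum_eq_zero fun t _ => ?_
  rw [hws t, zero_smul]

end Stmt7Aux

open Stmt7Aux in
/-- On the `k`-th exterior power, the map induced by `c • id` is `c ^ k • id`. -/
lemma exterior_map_smul_id {R : Type*} [CommRing R] {M : Type*} [AddCommGroup M] [Module R M]
    (c : R) (k : ℕ) {x : ExteriorAlgebra R M} (hx : x ∈ (⋀[R]^k M : Submodule R _)) :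
    (ExteriorAlgebra.map (c • (LinearMap.id : M →ₗ[R] M))) x = c ^ k • x := by
  rw [← ExteriorAlgebra.ιMulti_span_fixedDegree] at hx
  induction hx using Submodule.span_induction with
  | mem y hy =>
    obtain ⟨m, rfl⟩ := hy
    rw [ExteriorAlgebra.map_apply_ιMulti]
    have : ((c • (LinearMap.id : M →ₗ[R] M)) ∘ m) = fun i => c • m i := by
      ext i; simp
    rw [this]
    have := (ExteriorAlgebra.ιMulti R k (M := M)).toMultilinearMap.map_smul_univ
      (fun _ => c) m
    simpa using this
  | zero => simp
  | add y z _ _ hy hz => rw [map_add, hy, hz, smul_add]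
  | smul a y _ hy => rw [map_smul, hy, smul_comm]

/-- Let `R` be an integral domain and `f : M → N` an injective `R`-linear map
between free `R`-modules of the same finite rank `r`.  Then for every `0 ≤ k ≤ r` the induced
map `⋀^k f : ⋀^k M → ⋀^k N` is injective.  Here `⋀^k M` is realized as the `k`-th exterior
power submodule of the exterior algebra, and `⋀^k f` as the restriction to it of the algebra
map induced by `f` (which is determined by `m₁ ∧ ⋯ ∧ m_k ↦ f m₁ ∧ ⋯ ∧ f m_k`), so that
injectivity of `⋀^k f` is `Set.InjOn` of that algebra map on `⋀^k M`. -/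
theorem stmt7 {R : Type*} [CommRing R] [IsDomain R]
    {M N : Type*} [AddCommGroup M] [Module R M] [AddCommGroup N] [Module R N]
    (r : ℕ) (bM : Module.Basis (Fin r) R M) (bN : Module.Basis (Fin r) R N)
    (f : M →ₗ[R] N) (hf : Function.Injective f) :
    ∀ k : ℕ, k ≤ r →
      Set.InjOn (ExteriorAlgebra.map f).toLinearMap (⋀[R]^k M : Submodule R _) := by
  intro k _
  set A := LinearMap.toMatrix bM bN f with hA
  have hdet : A.det ≠ 0 := by
    intro h0
    obtain ⟨v, hv, hmv⟩ := (Matrix.exists_mulVec_eq_zero_iff).mpr h0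
    set m := bM.equivFun.symm v with hm
    have hrepr : ⇑(bM.repr m) = v := by
      have := bM.equivFun.apply_symm_apply v
      rwa [Module.Basis.equivFun_apply] at this
    have hfm : f m = 0 := by
      have h1 := LinearMap.toMatrix_mulVec_repr bM bN f m
      rw [hrepr, hmv] at h1
      have h2 : bN.repr (f m) = 0 := by
        ext i
        exact congrFun h1.symm i
      simpa using congrArg bN.repr.symm h2
    have hm0 : m = 0 := hf (by simpa using hfm)
    apply hv
    rw [← bM.equivFun.apply_symm_apply v, ← hm, hm0, map_zero]
  set g := Matrix.toLin bN bM A.adjugate with hg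
  have hgf : g ∘ₗ f = A.det • (LinearMap.id : M →ₗ[R] M) := by
    apply (LinearMap.toMatrix bM bM).injective
    rw [LinearMap.toMatrix_comp bM bN bM, hg, LinearMap.toMatrix_toLin, ← hA,
      Matrix.adjugate_mul, map_smul, LinearMap.toMatrix_id]
  intro x hx y hy hxy
  have hgfx : ∀ z : ExteriorAlgebra R M,
      ExteriorAlgebra.map g (ExteriorAlgebra.map f z) = ExteriorAlgebra.map (g ∘ₗ f) z := by
    intro z
    rw [← ExteriorAlgebra.map_comp_map]
    rfl
  have h1 : ExteriorAlgebra.map (g ∘ₗ f) x = ExteriorAlgebra.map (g ∘ₗ f) y := by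
    rw [← hgfx, ← hgfx]
    exact congrArg (ExteriorAlgebra.map g) hxy
  rw [hgf] at h1
  rw [exterior_map_smul_id A.det k hx, exterior_map_smul_id A.det k hy] at h1
  have hck : A.det ^ k ≠ 0 := pow_ne_zero _ hdet
  have hz : A.det ^ k • (x - y) = 0 := by
    rw [smul_sub, h1, sub_self]
  exact sub_eq_zero.mp (Stmt7Aux.smul_eq_zero_iff bM hck hz)
end
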